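/- Under the CD-CRC local-threshold dynamics (λ^{t+1} = λ^t − γΔλ^t with the three-case definition of Δλ^t, step size γ > 0, B^t ∈ [0,1], C^t ≥ 0, N^t ∈ [0,1], α ∈ [0,1]), one always has Δλ^t ≥ B^t − C^t. Consequently, if there are K independent such sequences (λ_k^t, B_k^t, C_k^t) with ∑_{k=1}^K C_k^t = C for all t, and λ_k^t ≥ −2γ for all t and k, then for every T ≥ 1: (1/T)∑_{t=1}^T ∑_{k=1}^K B_k^t ≤ C + ∑_{k=1}^K (λ_k^1 + 2γ)/(γT). -/
import Mathlib


theorem stmt4 (K : ℕ) (γ α Ctot : ℝ)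
    (lam Δ B C : Fin K → ℕ → ℝ) (N : ℕ → ℝ)
    (hγ : 0 < γ) (hα0 : 0 ≤ α) (hα1 : α ≤ 1)
    (hupd : ∀ k t, 1 ≤ t → lam k (t + 1) = lam k t - γ * Δ k t)
    (hΔ1 : ∀ k t, 1 ≤ t → B k t > C k t → Δ k t = B k t - C k t)
    (hΔ2 : ∀ k t, 1 ≤ t → B k t ≤ C k t → lam k t ≥ -γ →
      Δ k t = max (N t - α) (B k t - C k t))
    (hΔ3 : ∀ k t, 1 ≤ t → B k t ≤ C k t → lam k t < -γ → Δ k t = 0)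
    (hB : ∀ k t, 1 ≤ t → B k t ∈ Set.Icc (0 : ℝ) 1)
    (hC : ∀ k t, 1 ≤ t → 0 ≤ C k t)
    (hN : ∀ t, 1 ≤ t → N t ∈ Set.Icc (0 : ℝ) 1)
    (hCsum : ∀ t, 1 ≤ t → ∑ k, C k t = Ctot)
    (hlb : ∀ k t, 1 ≤ t → lam k t ≥ -(2 * γ)) :
    (∀ k t, 1 ≤ t → Δ k t ≥ B k t - C k t) ∧
    ∀ T : ℕ, 1 ≤ T →
      (1 / (T : ℝ)) * ∑ t ∈ Finset.Icc 1 T, ∑ k, B k t ≤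
        Ctot + ∑ k, (lam k 1 + 2 * γ) / (γ * T) := by
  have key : ∀ k t, 1 ≤ t → Δ k t ≥ B k t - C k t := by
    intro k t ht
    rcases lt_or_ge (C k t) (B k t) with h | h
    · rw [hΔ1 k t ht h]
    · rcases le_or_gt (-γ) (lam k t) with h2 | h2
      · rw [hΔ2 k t ht h h2]; exact le_max_right _ _
      · rw [hΔ3 k t ht h h2]; linarith
  refine ⟨key, ?_⟩
  intro T hT
  -- telescoping
  have tel : ∀ k, ∀ T : ℕ, 1 ≤ T →
      lam k (T + 1) = lam k 1 - γ * ∑ t ∈ Finset.Icc 1 T, Δ k t := by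
    intro k T hT
    induction T with
    | zero => omega
    | succ n ih =>
      rcases Nat.eq_or_lt_of_le hT with h1 | h1
      · simp [← h1, hupd k 1 le_rfl]
      · have hn : 1 ≤ n := by omega
        rw [Finset.sum_Icc_succ_top (by omega), hupd k (n+1) (by omega), ih hn]
        ring
  have sumΔ : ∀ k, ∑ t ∈ Finset.Icc 1 T, Δ k t ≤ (lam k 1 + 2 * γ) / γ := by
    intro k
    have h1 := tel k T hT
    have h2 := hlb k (T + 1) (by omega)
    rw [ge_iff_le, h1, le_sub_iff_add_le] at h2
    rw [le_div_iff₀ hγ]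
    nlinarith
  have sumB : ∀ k, ∑ t ∈ Finset.Icc 1 T, B k t ≤
      (∑ t ∈ Finset.Icc 1 T, C k t) + (lam k 1 + 2 * γ) / γ := by
    intro k
    have h1 : ∑ t ∈ Finset.Icc 1 T, (B k t - C k t) ≤ ∑ t ∈ Finset.Icc 1 T, Δ k t := by
      refine Finset.sum_le_sum fun t ht => ?_
      exact key k t (Finset.mem_Icc.mp ht).1
    rw [Finset.sum_sub_distrib] at h1
    have := sumΔ k
    linarith
  have hTpos : (0 : ℝ) < T := by exact_mod_cast hT
  rw [Finset.sum_comm]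
  have total : ∑ k, ∑ t ∈ Finset.Icc 1 T, B k t ≤
      T * Ctot + ∑ k, (lam k 1 + 2 * γ) / γ := by
    calc ∑ k, ∑ t ∈ Finset.Icc 1 T, B k t
        ≤ ∑ k, ((∑ t ∈ Finset.Icc 1 T, C k t) + (lam k 1 + 2 * γ) / γ) :=
          Finset.sum_le_sum fun k _ => sumB k
      _ = (∑ t ∈ Finset.Icc 1 T, ∑ k, C k t) + ∑ k, (lam k 1 + 2 * γ) / γ := by
          rw [Finset.sum_add_distrib, Finset.sum_comm]
      _ = T * Ctot + ∑ k, (lam k 1 + 2 * γ) / γ := by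
          congr 1
          rw [Finset.sum_congr rfl fun t ht => hCsum t (Finset.mem_Icc.mp ht).1]
          simp [Nat.card_Icc]
  have hdiv : ∑ k, (lam k 1 + 2 * γ) / (γ * T) = (∑ k, (lam k 1 + 2 * γ) / γ) / T := by
    rw [Finset.sum_div]
    exact Finset.sum_congr rfl fun k _ => by rw [div_div]
  rw [hdiv, one_div, inv_mul_le_iff₀ hTpos]
  rw [mul_comm (T : ℝ), add_mul, div_mul_cancel₀ _ (ne_of_gt hTpos), mul_comm Ctot]
  exact total
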